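/- Let b ∈ ℕ with b ≥ 2, s ∈ ℕ ∪ {0}, and u ∈ ℤ with 0 ≤ u ≤ b−1, such that sb + u ≥ 1. Then Range(f_{sb + u + 1/b}) ⊆ s·⟦0, b−1⟧ + ⟦0, u⟧, i.e., every value of f_{sb+u+1/b} can be written as sr + v with 0 ≤ r ≤ b−1 and 0 ≤ v ≤ u. -/
import Mathlib

/-- `f α n = ⌊α² n⌋ - ⌊α ⌊α n⌋⌋` for a real parameter `α` and positive integer `n`. -/
noncomputable def f (α : ℝ) (n : ℕ) : ℤ :=
  ⌊α ^ 2 * (n : ℝ)⌋ - ⌊α * ((⌊α * (n : ℝ)⌋ : ℤ) : ℝ)⌋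

/-- `Range (f_α) = {f_α(n) : n ∈ ℕ, n ≥ 1}`. -/
def Range (α : ℝ) : Set ℤ := {v : ℤ | ∃ n : ℕ, 1 ≤ n ∧ f α n = v}

lemma floor_div_real (c : ℤ) (d : ℕ) : ⌊((c:ℝ))/(d:ℝ)⌋ = c / d := by
  rw [show ((c:ℝ)/(d:ℝ)) = ((c/(d:ℚ) : ℚ) : ℝ) by push_cast; ring, Rat.floor_cast,
    Rat.floor_intCast_div_natCast]

lemma floor_aux (a c : ℤ) (d : ℕ) : ⌊(a:ℝ)*c + (c:ℝ)/(d:ℝ)⌋ = a*c + c/d := by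
  rw [show (a:ℝ)*c + (c:ℝ)/(d:ℝ) = ((a*c : ℤ):ℝ) + (c:ℝ)/(d:ℝ) by push_cast; ring,
    Int.floor_intCast_add, floor_div_real]

set_option maxHeartbeats 1000000 in
theorem stmt11 (b : ℕ) (hb : 2 ≤ b) (s : ℕ) (u : ℤ)
    (hu0 : 0 ≤ u) (hu1 : u ≤ (b : ℤ) - 1) (hpos : 1 ≤ (s : ℤ) * (b : ℤ) + u) :
    Range ((s : ℝ) * (b : ℝ) + (u : ℝ) + 1 / (b : ℝ)) ⊆
      {w : ℤ | ∃ r v : ℤ, 0 ≤ r ∧ r ≤ (b : ℤ) - 1 ∧ 0 ≤ v ∧ v ≤ u ∧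
        w = (s : ℤ) * r + v} := by
  intro w hw
  obtain ⟨n, hn1, hfn⟩ := hw
  set a : ℤ := (s:ℤ)*b + u with ha
  have hbR : (0:ℝ) < (b:ℝ) := by positivity
  have hbZ : (0:ℤ) < (b:ℤ) := by exact_mod_cast hbR
  set α : ℝ := (s : ℝ) * (b : ℝ) + (u : ℝ) + 1 / (b : ℝ) with hαdef
  have hα : α = (a:ℝ) + 1/(b:ℝ) := by rw [hαdef, ha]; push_cast; ring
  have hN : ((n:ℤ):ℝ) = (n:ℝ) := by push_cast; ring
  set N : ℤ := (n : ℤ) with hNdef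
  -- floor of α * n
  have h1 : ⌊α * (n:ℝ)⌋ = a*N + N/(b:ℤ) := by
    rw [show α * (n:ℝ) = (a:ℝ)*((N:ℤ):ℝ) + ((N:ℤ):ℝ)/(b:ℝ) by rw [hα, hNdef, hN]; ring]
    exact_mod_cast floor_aux a N b
  set M : ℤ := a*N + N/(b:ℤ) with hM
  -- floor of α * M
  have h2 : ⌊α * ((M:ℤ):ℝ)⌋ = a*M + M/(b:ℤ) := by
    rw [show α * ((M:ℤ):ℝ) = (a:ℝ)*M + (M:ℝ)/(b:ℝ) by rw [hα]; push_cast; ring]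
    exact_mod_cast floor_aux a M b
  -- floor of α² * n
  have h3 : ⌊α^2 * (n:ℝ)⌋ = a^2*N + ((2*a*b+1)*N)/((b:ℤ)^2) := by
    have : α^2 * (n:ℝ) = ((a:ℤ):ℝ)^2*((N:ℤ):ℝ) + (((2*a*b+1)*N : ℤ):ℝ)/((b^2 : ℕ):ℝ) := by
      rw [hα, hNdef, hN]; push_cast; field_simp; ring
    rw [this, show ((a:ℤ):ℝ)^2*((N:ℤ):ℝ) = (((a^2*N : ℤ)):ℝ) by push_cast; ring,
      Int.floor_intCast_add, floor_div_real]
    push_cast; ring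
  have hfval : f α n = a^2*N + ((2*a*b+1)*N)/((b:ℤ)^2) - (a*M + M/(b:ℤ)) := by
    show ⌊α ^ 2 * (n : ℝ)⌋ - ⌊α * ((⌊α * (n : ℝ)⌋ : ℤ) : ℝ)⌋ = _
    rw [h3, h1, h2]
  -- integer part
  set t : ℤ := N % (b:ℤ) with ht
  set q : ℤ := N / (b:ℤ) with hq
  have hNqt : (b:ℤ)*q + t = N := Int.mul_ediv_add_emod N b
  have ht0 : 0 ≤ t := Int.emod_nonneg N (by omega)
  have htb : t < b := Int.emod_lt_of_pos N hbZ
  set m : ℤ := a*t + q with hm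
  set K : ℤ := m / (b:ℤ) with hK
  set J : ℤ := m % (b:ℤ) with hJ
  have hmKJ : (b:ℤ)*K + J = m := Int.mul_ediv_add_emod m b
  have hJ0 : 0 ≤ J := Int.emod_nonneg m (by omega)
  have hJb : J < b := Int.emod_lt_of_pos m hbZ
  set v : ℤ := (J + t*u) / (b:ℤ) with hv
  set wr : ℤ := (J + t*u) % (b:ℤ) with hwr
  have hvw : (b:ℤ)*v + wr = J + t*u := Int.mul_ediv_add_emod _ b
  have hw0 : 0 ≤ wr := Int.emod_nonneg _ (by omega)
  have hwb : wr < b := Int.emod_lt_of_pos _ hbZ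
  have hbne : (b:ℤ) ≠ 0 := by omega
  have hb2ne : ((b:ℤ)^2) ≠ 0 := pow_ne_zero _ hbne
  -- M / b = a*q + K
  have hMdiv : M / (b:ℤ) = a*q + K := by
    have : M = J + (a*q + K)*(b:ℤ) := by
      rw [hM, ← hNqt]; linarith [hmKJ]
    rw [this, Int.add_mul_ediv_right _ _ hbne,
      Int.ediv_eq_zero_of_lt hJ0 hJb, zero_add]
  -- big division
  have hbig : ((2*a*b+1)*N)/((b:ℤ)^2) = 2*a*q + (s:ℤ)*t + K + v := by
    have hlt : (b:ℤ)*wr + t < (b:ℤ)^2 := by nlinarith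
    have hge : 0 ≤ (b:ℤ)*wr + t := by positivity
    have hidexp : (2*a*b+1)*N = ((b:ℤ)*wr + t) + (2*a*q + (s:ℤ)*t + K + v)*(b:ℤ)^2 := by
      have key : 2*a*t + q = (b:ℤ)*((s:ℤ)*t + K + v) + wr := by
        have hat : a*t = (s:ℤ)*(b:ℤ)*t + u*t := by rw [ha]; ring
        linarith [hmKJ, hvw, hat]
      calc (2*a*b+1)*N = (2*a*b+1)*((b:ℤ)*q + t) := by rw [hNqt]
        _ = (b:ℤ)*(2*a*t + q) + 2*a*q*(b:ℤ)^2 + t := by ring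
        _ = (b:ℤ)*((b:ℤ)*((s:ℤ)*t + K + v) + wr) + 2*a*q*(b:ℤ)^2 + t := by rw [key]
        _ = ((b:ℤ)*wr + t) + (2*a*q + (s:ℤ)*t + K + v)*(b:ℤ)^2 := by ring
    rw [hidexp, Int.add_mul_ediv_right _ _ hb2ne,
      Int.ediv_eq_zero_of_lt hge hlt, zero_add]
  -- bounds on v
  have hv0 : 0 ≤ v := Int.ediv_nonneg (by nlinarith) (le_of_lt hbZ)
  have hvu : v ≤ u := by
    have : J + t*u < (u+1)*(b:ℤ) := by nlinarith
    have := Int.ediv_lt_iff_lt_mul hbZ |>.mpr this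
    omega
  refine ⟨t, v, ht0, by omega, hv0, hvu, ?_⟩
  rw [← hfn, hfval, hbig, hMdiv, hM]
  ring
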